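/- Let U be a Banach space, V a Hilbert space, and b : U × V → ℝ a bilinear form satisfying: (i) for all u ∈ U, if b(u,v) = 0 for all v ∈ V then u = 0; (ii) there is C_infsup > 0 with C_infsup‖v‖_V ≤ sup_{u ∈ U, u ≠ 0} b(u,v)/‖u‖_U for all v ∈ V; (iii) there is C_b > 0 with b(u,v) ≤ C_b‖u‖_U‖v‖_V for all u, v. Then the map u ↦ ‖u‖_E := sup_{v ∈ V, v ≠ 0} b(u,v)/‖v‖_V defines a norm on U satisfying C_infsup‖u‖_U ≤ ‖u‖_E ≤ C_b‖u‖_U for all u ∈ U. -/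

import Mathlib

open scoped RealInnerProductSpace

set_option maxHeartbeats 1000000 in
/-- The energy norm `u ↦ sup_{v ≠ 0} b(u,v)/‖v‖_V` is a norm on `U`
equivalent to `‖·‖_U`, with constants `C_infsup` and `C_b`. -/
theorem dpg_energy_norm_equivalence
    {U V : Type*} [NormedAddCommGroup U] [NormedSpace ℝ U] [CompleteSpace U]
    [NormedAddCommGroup V] [InnerProductSpace ℝ V] [CompleteSpace V]
    (b : U →ₗ[ℝ] V →ₗ[ℝ] ℝ) (Cinf Cb : ℝ) (hCinf : 0 < Cinf) (hCb : 0 < Cb)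
    (hinj : ∀ u : U, (∀ v : V, b u v = 0) → u = 0)
    (hinfsup : ∀ v : V, Cinf * ‖v‖ ≤ ⨆ u : {u : U // u ≠ 0}, b u.1 v / ‖u.1‖)
    (hbdd : ∀ (u : U) (v : V), b u v ≤ Cb * ‖u‖ * ‖v‖) :
    ∀ u : U,
      Cinf * ‖u‖ ≤ (⨆ v : {v : V // v ≠ 0}, b u v.1 / ‖v.1‖) ∧
      (⨆ v : {v : V // v ≠ 0}, b u v.1 / ‖v.1‖) ≤ Cb * ‖u‖ ∧
      ((⨆ v : {v : V // v ≠ 0}, b u v.1 / ‖v.1‖) = 0 ↔ u = 0) ∧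
      (∀ u' : U,
        (⨆ v : {v : V // v ≠ 0}, b (u + u') v.1 / ‖v.1‖) ≤
          (⨆ v : {v : V // v ≠ 0}, b u v.1 / ‖v.1‖) +
            (⨆ v : {v : V // v ≠ 0}, b u' v.1 / ‖v.1‖)) ∧
      (∀ c : ℝ,
        (⨆ v : {v : V // v ≠ 0}, b (c • u) v.1 / ‖v.1‖) =
          |c| * (⨆ v : {v : V // v ≠ 0}, b u v.1 / ‖v.1‖)) := by
  classical
  rcases subsingleton_or_nontrivial U with hU | hU
  · -- trivial case: `U` is a subsingleton, so every `u = 0` and every `b u v = 0`.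
    have hzero : ∀ w : U, (⨆ v : {v : V // v ≠ 0}, b w v.1 / ‖v.1‖) = 0 := by
      intro w
      rcases isEmpty_or_nonempty {v : V // v ≠ 0} with hV | hV
      · exact Real.iSup_of_isEmpty _
      · simp only [show w = 0 from Subsingleton.elim w 0, map_zero, LinearMap.zero_apply,
          zero_div, ciSup_const]
    intro u
    have hu : u = 0 := Subsingleton.elim u 0
    subst hu
    refine ⟨?_, ?_, ?_, ?_, ?_⟩ <;> simp [hzero, Subsingleton.elim _ (0 : U)]
  -- main case: `U` is nontrivial
  -- the continuous bilinear form
  have habs : ∀ (x : U) (v : V), ‖b x v‖ ≤ Cb * ‖x‖ * ‖v‖ := by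
    intro x v
    rw [Real.norm_eq_abs, abs_le]
    constructor
    · have h1 := hbdd (-x) v
      simp only [map_neg, LinearMap.neg_apply, norm_neg] at h1
      linarith
    · exact hbdd x v
  set B : U →L[ℝ] V →L[ℝ] ℝ := LinearMap.mkContinuous₂ b Cb habs with hB
  have hBnorm : ∀ x : U, ‖B x‖ ≤ Cb * ‖x‖ := by
    intro x
    calc ‖B x‖ ≤ ‖B‖ * ‖x‖ := B.le_opNorm x
    _ ≤ Cb * ‖x‖ := by
        gcongr
        exact LinearMap.mkContinuous₂_norm_le _ hCb.le _
  -- the "optimal test function" map obtained from the Riesz representation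
  set t : U → V := fun x => (InnerProductSpace.toDual ℝ V).symm (B x) with ht
  have hT : ∀ (x : U) (v : V), ⟪t x, v⟫ = b x v := by
    intro x v
    rw [ht]
    simp only [InnerProductSpace.toDual_symm_apply]
    rfl
  have htnorm : ∀ x : U, ‖t x‖ = ‖B x‖ := fun x => LinearIsometryEquiv.norm_map _ _
  have htadd : ∀ x y : U, t (x + y) = t x + t y := by intro x y; simp [ht, map_add]
  have htsmul : ∀ (c : ℝ) (x : U), t (c • x) = c • t x := by intro c x; simp [ht, map_smul]
  have hlin : IsLinearMap ℝ t := ⟨htadd, htsmul⟩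
  have htcont : Continuous t :=
    (InnerProductSpace.toDual ℝ V).symm.continuous.comp B.continuous
  have htinj : ∀ x : U, t x = 0 → x = 0 := by
    intro x hx
    refine hinj x fun v => ?_
    rw [← hT, hx, inner_zero_left]
  -- nonemptiness of the index types
  have hUne : Nonempty {x : U // x ≠ 0} := by
    obtain ⟨x, hx⟩ := exists_ne (0 : U)
    exact ⟨⟨x, hx⟩⟩
  have hVne : Nonempty {v : V // v ≠ 0} := by
    obtain ⟨x, hx⟩ := exists_ne (0 : U)
    have : ¬∀ v : V, b x v = 0 := fun hval => hx (hinj x hval)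
    push_neg at this
    obtain ⟨v, hv⟩ := this
    refine ⟨⟨v, fun h => hv ?_⟩⟩
    rw [h, map_zero]
  -- consequence of the inf-sup condition
  have hsup : ∀ (z : V) (M : ℝ), (∀ x : U, x ≠ 0 → b x z / ‖x‖ ≤ M) → Cinf * ‖z‖ ≤ M := by
    intro z M hM
    exact le_trans (hinfsup z) (ciSup_le fun x => hM x.1 x.2)
  -- identification of the energy norm with `‖t x‖`
  have hE : ∀ x : U, (⨆ v : {v : V // v ≠ 0}, b x v.1 / ‖v.1‖) = ‖t x‖ := by
    intro x
    have hub : ∀ v : {v : V // v ≠ 0}, b x v.1 / ‖v.1‖ ≤ ‖t x‖ := by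
      intro v
      have hv : 0 < ‖v.1‖ := norm_pos_iff.mpr v.2
      rw [div_le_iff₀ hv, ← hT]
      exact real_inner_le_norm (t x) v.1
    have hbdd' : BddAbove (Set.range fun v : {v : V // v ≠ 0} => b x v.1 / ‖v.1‖) := by
      refine ⟨‖t x‖, ?_⟩
      rintro _ ⟨v, rfl⟩
      exact hub v
    refine le_antisymm (ciSup_le hub) ?_
    rcases eq_or_ne (t x) 0 with h | h
    · rw [h, norm_zero]
      obtain ⟨v⟩ := hVne
      refine le_trans (le_of_eq ?_) (le_ciSup hbdd' v)
      rw [← hT, h, inner_zero_left, zero_div]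
    · refine le_trans (le_of_eq ?_) (le_ciSup hbdd' ⟨t x, h⟩)
      rw [← hT, real_inner_self_eq_norm_mul_norm, mul_div_assoc,
        div_self (norm_ne_zero_iff.mpr h), mul_one]
  -- Step A: controlled approximate preimages, via Hahn-Banach separation
  have stepA : ∀ (y : V) (ρ δ : ℝ), ‖y‖ < Cinf * ρ → 0 < δ →
      ∃ x : U, ‖x‖ ≤ ρ ∧ ‖y - t x‖ < δ := by
    intro y ρ δ hyρ hδ
    by_contra hcon
    push_neg at hcon
    have hρ : 0 < ρ := by nlinarith [norm_nonneg y]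
    set S := closure (t '' Metric.closedBall (0 : U) ρ) with hS
    have hSconv : Convex ℝ S := ((convex_closedBall _ _).is_linear_image hlin).closure
    have hynotin : y ∉ S := by
      intro hy
      obtain ⟨w, hwS, hwd⟩ := Metric.mem_closure_iff.mp hy δ hδ
      obtain ⟨x, hx, rfl⟩ := hwS
      rw [Metric.mem_closedBall, dist_zero_right] at hx
      rw [dist_eq_norm] at hwd
      exact absurd hwd (not_lt.mpr (hcon x hx))
    obtain ⟨f, u, hfS, hfy⟩ := geometric_hahn_banach_closed_point hSconv isClosed_closure hynotin
    set z : V := (InnerProductSpace.toDual ℝ V).symm f with hz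
    have hfz : ∀ w : V, f w = ⟪z, w⟫ := by
      intro w
      rw [hz, InnerProductSpace.toDual_symm_apply]
    have hu0 : 0 < u := by
      have h0 : (0 : V) ∈ S := subset_closure ⟨0, by simp [hρ.le], hlin.map_zero⟩
      have := hfS 0 h0
      simpa using this
    have hbnd : ∀ x : U, ‖x‖ ≤ ρ → b x z < u := by
      intro x hx
      have h1 : t x ∈ S := subset_closure ⟨x, by simpa using hx, rfl⟩
      have h2 := hfS _ h1
      rw [hfz, real_inner_comm, hT] at h2
      exact h2
    have hkey : Cinf * ‖z‖ ≤ u / ρ := by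
      apply hsup
      intro x hx
      have hxn : 0 < ‖x‖ := norm_pos_iff.mpr hx
      have h1 : b ((ρ / ‖x‖) • x) z < u := by
        apply hbnd
        rw [norm_smul, Real.norm_eq_abs, abs_of_pos (by positivity)]
        field_simp
        exact le_rfl
      rw [map_smul, LinearMap.smul_apply, smul_eq_mul, div_mul_eq_mul_div,
        div_lt_iff₀ hxn] at h1
      rw [div_le_div_iff₀ hxn hρ]
      nlinarith
    have hzpos : 0 < ‖z‖ := by
      rcases eq_or_ne z 0 with h | h
      · exfalso
        rw [hfz, h, inner_zero_left] at hfy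
        linarith
      · exact norm_pos_iff.mpr h
    have h2 : u < ‖z‖ * ‖y‖ := by
      have := real_inner_le_norm z y
      rw [hfz] at hfy
      linarith
    rw [le_div_iff₀ hρ] at hkey
    nlinarith [mul_lt_mul_of_pos_left hyρ hzpos]
  -- Step B: exact controlled preimages, by iteration and completeness of `U`
  have claimSurj : ∀ r : ℝ, 1 / Cinf < r → ∀ y : V, ∃ x : U, t x = y ∧ ‖x‖ ≤ r * ‖y‖ := by
    intro r hr y
    obtain ⟨r₁, h1, h2⟩ := exists_between hr
    have hr₁ : 0 < r₁ := lt_trans (by positivity) h1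
    have hrpos : 0 < r := lt_trans hr₁ h2
    set q : ℝ := 1 - r₁ / r with hq
    have hq0 : 0 < q := by
      have h3 : r₁ / r < 1 := (div_lt_one hrpos).mpr h2
      rw [hq]; linarith
    have hq1 : q < 1 := by
      have h3 : 0 < r₁ / r := by positivity
      rw [hq]; linarith
    have approx : ∀ y' : V, ∃ x : U, ‖x‖ ≤ r₁ * ‖y'‖ ∧ ‖y' - t x‖ ≤ q * ‖y'‖ := by
      intro y'
      rcases eq_or_ne y' 0 with rfl | hy'
      · exact ⟨0, by simp [hlin.map_zero]⟩
      · have hy'n : 0 < ‖y'‖ := norm_pos_iff.mpr hy'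
        have h3 : 1 < Cinf * r₁ := by
          rw [div_lt_iff₀ hCinf] at h1
          linarith
        obtain ⟨x, hx1, hx2⟩ := stepA y' (r₁ * ‖y'‖) (q * ‖y'‖)
          (by nlinarith) (by positivity)
        exact ⟨x, hx1, hx2.le⟩
    choose g hg1 hg2 using approx
    set h : V → V := fun y' => y' - t (g y') with hh
    have hnle : ∀ n : ℕ, ‖h^[n] y‖ ≤ q ^ n * ‖y‖ := by
      intro n
      induction n with
      | zero => simp
      | succ n IH =>
        rw [Function.iterate_succ']
        calc ‖h (h^[n] y)‖ ≤ q * ‖h^[n] y‖ := hg2 _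
        _ ≤ q * (q ^ n * ‖y‖) := by gcongr
        _ = q ^ (n + 1) * ‖y‖ := by ring
    set u : ℕ → U := fun n => g (h^[n] y) with hu
    have ule : ∀ n, ‖u n‖ ≤ q ^ n * (r₁ * ‖y‖) := by
      intro n
      calc ‖u n‖ ≤ r₁ * ‖h^[n] y‖ := hg1 _
      _ ≤ r₁ * (q ^ n * ‖y‖) := by gcongr; exact hnle n
      _ = q ^ n * (r₁ * ‖y‖) := by ring
    have sNu : Summable fun n => ‖u n‖ := by
      refine Summable.of_nonneg_of_le (fun n => norm_nonneg _) ule ?_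
      exact (summable_geometric_of_lt_one hq0.le hq1).mul_right _
    have su : Summable u := sNu.of_norm
    set x : U := ∑' n, u n with hx
    have x_ineq : ‖x‖ ≤ r * ‖y‖ := by
      calc ‖x‖ ≤ ∑' n, ‖u n‖ := norm_tsum_le_tsum_norm sNu
      _ ≤ ∑' n, q ^ n * (r₁ * ‖y‖) :=
          Summable.tsum_le_tsum ule sNu ((summable_geometric_of_lt_one hq0.le hq1).mul_right _)
      _ = (∑' n : ℕ, q ^ n) * (r₁ * ‖y‖) := tsum_mul_right
      _ = (1 - q)⁻¹ * (r₁ * ‖y‖) := by rw [tsum_geometric_of_lt_one hq0.le hq1]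
      _ = r * ‖y‖ := by
          rw [hq]
          have h4 : (1 : ℝ) - (1 - r₁ / r) = r₁ / r := by ring
          rw [h4, inv_div]
          field_simp
    have tsum_map : ∀ n : ℕ, t (∑ i ∈ Finset.range n, u i) = y - h^[n] y := by
      intro n
      induction n with
      | zero => simp [hlin.map_zero]
      | succ n IH =>
        rw [Finset.sum_range_succ, hlin.map_add, IH, Function.iterate_succ_apply']
        simp only [hh]
        abel
    have htend : Filter.Tendsto (fun n => ∑ i ∈ Finset.range n, u i) Filter.atTop (nhds x) :=
      su.hasSum.tendsto_sum_nat
    have L1 : Filter.Tendsto (fun n => t (∑ i ∈ Finset.range n, u i)) Filter.atTop (nhds (t x)) :=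
      (htcont.tendsto _).comp htend
    simp only [tsum_map] at L1
    have L2 : Filter.Tendsto (fun n : ℕ => y - h^[n] y) Filter.atTop (nhds (y - 0)) := by
      refine Filter.Tendsto.const_sub _ ?_
      rw [tendsto_iff_norm_sub_tendsto_zero]
      simp only [sub_zero]
      refine squeeze_zero (fun _ => norm_nonneg _) hnle ?_
      rw [← zero_mul ‖y‖]
      exact (tendsto_pow_atTop_nhds_zero_of_lt_one hq0.le hq1).mul_const _
    rw [sub_zero] at L2
    exact ⟨x, tendsto_nhds_unique L1 L2, x_ineq⟩
  -- the lower bound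
  have final : ∀ x0 : U, Cinf * ‖x0‖ ≤ ‖t x0‖ := by
    intro x0
    have key : ∀ r : ℝ, 1 / Cinf < r → ‖x0‖ ≤ r * ‖t x0‖ := by
      intro r hr
      obtain ⟨x, hxt, hxn⟩ := claimSurj r hr (t x0)
      have hxx : x = x0 := by
        have h0 : t (x - x0) = 0 := by
          rw [hlin.map_sub, hxt, sub_self]
        exact sub_eq_zero.mp (htinj _ h0)
      rwa [hxx] at hxn
    have hfin : ‖x0‖ ≤ (1 / Cinf) * ‖t x0‖ := by
      refine le_of_forall_gt_imp_ge_of_dense fun s hs => ?_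
      rcases eq_or_lt_of_le (norm_nonneg (t x0)) with h | h
      · have h5 := key (1 / Cinf + 1) (by linarith)
        rw [← h, mul_zero] at h5
        have hs0 : 0 ≤ s := by
          rw [← h, mul_zero] at hs
          linarith
        linarith
      · have hr : 1 / Cinf < s / ‖t x0‖ := by
          rw [lt_div_iff₀ h]
          exact hs
        have h5 := key _ hr
        rwa [div_mul_cancel₀ _ (ne_of_gt h)] at h5
    calc Cinf * ‖x0‖ ≤ Cinf * ((1 / Cinf) * ‖t x0‖) := by nlinarith
    _ = ‖t x0‖ := by field_simp
  -- assemble everything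
  intro x
  refine ⟨?_, ?_, ?_, ?_, ?_⟩
  · rw [hE x]
    exact final x
  · rw [hE x]
    calc ‖t x‖ = ‖B x‖ := htnorm x
    _ ≤ Cb * ‖x‖ := hBnorm x
  · rw [hE x]
    constructor
    · intro hx
      exact htinj x (norm_eq_zero.mp hx)
    · intro hx
      subst hx
      rw [hlin.map_zero, norm_zero]
  · intro u'
    rw [hE, hE, hE, htadd]
    exact norm_add_le _ _
  · intro c
    rw [hE, hE, htsmul, norm_smul, Real.norm_eq_abs]
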